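/- arXiv:0707.1241 — 5 statements merged into one kernel-verified Lean document; each statement's English description precedes it below -/
import Mathlib

section
/- Let n ≥ 1, let q ∈ ℝ^n, and for each pair s < t in {1,…,n} let λ_{t,s} ∈ ℝ. Define the simple graph G on {1,…,n} with an edge between t and s if and only if t ≠ s and λ_{t,s} ≠ 0, and define f : ℝ^n → ℝ by f(u) = Σ_t q_t u_t + Σ_{s<t: λ_{t,s}>0} λ_{t,s}|u_t − u_s| + Σ_{s<t: λ_{t,s}<0} |λ_{t,s}| |u_t + u_s − 1|. If every edge {t,s} of G with λ_{t,s} < 0 is a bridge of G (i.e., lies on no cycle of G), then the minimum of f over the cube [0,1]^n is attained at some point x ∈ {0,1}^n; that is, there exists x ∈ {0,1}^n with f(x) ≤ f(u) for all u ∈ [0,1]^n. -/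
open MeasureTheory

set_option maxHeartbeats 1000000

lemma II.sum' {ι : Type*} (s : Finset ι) {f : ι → ℝ → ℝ} {a b : ℝ}
    (h : ∀ i ∈ s, IntervalIntegrable (f i) volume a b) :
    IntervalIntegrable (fun x => ∑ i ∈ s, f i x) volume a b := by
  have hfun : (fun x => ∑ i ∈ s, f i x) = ∑ i ∈ s, f i := by
    funext x; simp [Finset.sum_apply]
  rw [hfun]; exact IntervalIntegrable.sum s h

lemma II.add' {f g : ℝ → ℝ} {a b : ℝ}
    (hf : IntervalIntegrable f volume a b)
    (hg : IntervalIntegrable g volume a b) :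
    IntervalIntegrable (fun x => f x + g x) volume a b := hf.add hg

lemma step_intervalIntegrable (a : ℝ) :
    IntervalIntegrable (fun θ : ℝ => if θ < a then (1:ℝ) else 0) volume 0 1 := by
  have h : (fun θ : ℝ => if θ < a then (1:ℝ) else 0)
      = Set.indicator (Set.Iio a) (fun _ => (1:ℝ)) := by
    funext θ; simp [Set.indicator, Set.mem_Iio]
  rw [h, intervalIntegrable_iff]
  exact (integrableOn_const measure_Ioc_lt_top.ne).indicator measurableSet_Iio

lemma step_integral (a : ℝ) (h0 : 0 ≤ a) (h1 : a ≤ 1) :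
    ∫ θ in (0:ℝ)..1, (if θ < a then (1:ℝ) else 0) = a := by
  have h : (fun θ : ℝ => if θ < a then (1:ℝ) else 0)
      = Set.indicator (Set.Iio a) (fun _ => (1:ℝ)) := by
    funext θ; simp [Set.indicator, Set.mem_Iio]
  rw [intervalIntegral.integral_of_le zero_le_one, h,
    setIntegral_indicator measurableSet_Iio]
  have h2 : Set.Ioc (0:ℝ) 1 ∩ Set.Iio a = Set.Ioo 0 a := by
    ext θ
    simp only [Set.mem_inter_iff, Set.mem_Ioc, Set.mem_Iio, Set.mem_Ioo]
    constructor
    · rintro ⟨⟨h3, h4⟩, h5⟩; exact ⟨h3, h5⟩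
    · rintro ⟨h3, h4⟩; exact ⟨⟨h3, le_trans h4.le h1⟩, h4⟩
  rw [h2, setIntegral_const, measureReal_def, Real.volume_Ioo, smul_eq_mul, mul_one,
    ENNReal.toReal_ofReal (by linarith)]
  ring

lemma abs_step_sub_step (a b θ : ℝ) :
    |(if θ < a then (1:ℝ) else 0) - (if θ < b then (1:ℝ) else 0)|
      = (if θ < max a b then (1:ℝ) else 0) - (if θ < min a b then (1:ℝ) else 0) := by
  rcases le_total a b with h | h
  · rw [max_eq_right h, min_eq_left h]
    by_cases h1 : θ < a <;> by_cases h2 : θ < b <;>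
      simp [h1, h2] <;> first | linarith | exact h1 (lt_of_lt_of_le h2 h)
  · rw [max_eq_left h, min_eq_right h]
    by_cases h1 : θ < a <;> by_cases h2 : θ < b <;>
      simp [h1, h2] <;> first | linarith | exact h2 (lt_of_lt_of_le h1 h)

lemma band_intervalIntegrable (a b : ℝ) (co : ℝ) :
    IntervalIntegrable
      (fun θ : ℝ => co * |(if θ < a then (1:ℝ) else 0) - (if θ < b then (1:ℝ) else 0)|)
      volume 0 1 := by
  have h : (fun θ : ℝ => co * |(if θ < a then (1:ℝ) else 0) - (if θ < b then (1:ℝ) else 0)|)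
      = fun θ => co * ((if θ < max a b then (1:ℝ) else 0) - (if θ < min a b then (1:ℝ) else 0)) := by
    funext θ; rw [abs_step_sub_step]
  rw [h]
  exact ((step_intervalIntegrable (max a b)).sub (step_intervalIntegrable (min a b))).const_mul co

lemma lovasz (n : ℕ) (c : ℝ) (r : Fin n → ℝ) (μ : Fin n → Fin n → ℝ)
    (hμ : ∀ t s, 0 ≤ μ t s) :
    ∃ y : Fin n → ℝ, (∀ t, y t = 0 ∨ y t = 1) ∧
      ∀ w : Fin n → ℝ, (∀ t, w t ∈ Set.Icc (0:ℝ) 1) →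
        (c + ∑ t, r t * y t + ∑ t, ∑ s, μ t s * |y t - y s|)
          ≤ (c + ∑ t, r t * w t + ∑ t, ∑ s, μ t s * |w t - w s|) := by
  classical
  have hGf : ∀ v : Fin n → ℝ, True := fun _ => trivial
  set Gf : (Fin n → ℝ) → ℝ :=
    fun v => c + ∑ t, r t * v t + ∑ t, ∑ s, μ t s * |v t - v s| with hGfdef
  set Y : Finset (Fin n → ℝ) :=
    (Finset.univ : Finset (Fin n → Bool)).image (fun b t => if b t then (1:ℝ) else 0) with hY
  have hYne : Y.Nonempty := Finset.Nonempty.image ⟨fun _ => true, Finset.mem_univ _⟩ _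
  obtain ⟨y, hyY, hymin⟩ := Finset.exists_min_image Y Gf hYne
  refine ⟨y, ?_, ?_⟩
  · obtain ⟨b, -, rfl⟩ := Finset.mem_image.1 hyY
    intro t; by_cases h : b t <;> simp [h]
  intro w hw
  have hpt : ∀ θ : ℝ, Gf y ≤ Gf (fun t => if θ < w t then (1:ℝ) else 0) := by
    intro θ
    refine hymin _ (Finset.mem_image.2 ⟨fun t => decide (θ < w t), Finset.mem_univ _, ?_⟩)
    funext t; by_cases h : θ < w t <;> simp [h]
  -- integrability pieces
  have hint1 : ∀ t : Fin n, IntervalIntegrable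
      (fun θ : ℝ => r t * (if θ < w t then (1:ℝ) else 0)) volume 0 1 :=
    fun t => (step_intervalIntegrable (w t)).const_mul _
  have hint2 : ∀ t s : Fin n, IntervalIntegrable
      (fun θ : ℝ => μ t s * |(if θ < w t then (1:ℝ) else 0) - (if θ < w s then (1:ℝ) else 0)|)
      volume 0 1 := fun t s => band_intervalIntegrable (w t) (w s) (μ t s)
  have hintF : IntervalIntegrable
      (fun θ : ℝ => Gf (fun t => if θ < w t then (1:ℝ) else 0)) volume 0 1 := by
    have h : (fun θ : ℝ => Gf (fun t => if θ < w t then (1:ℝ) else 0))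
        = fun θ : ℝ => (c + ∑ t, r t * (if θ < w t then (1:ℝ) else 0))
          + ∑ t, ∑ s, μ t s * |(if θ < w t then (1:ℝ) else 0) - (if θ < w s then (1:ℝ) else 0)| := by
      funext θ; simp only [hGfdef]
    rw [h]
    refine II.add' (II.add' intervalIntegrable_const ?_) ?_
    · exact II.sum' Finset.univ (fun t _ => hint1 t)
    · exact II.sum' Finset.univ (fun t _ => II.sum' Finset.univ (fun s _ => hint2 t s))
  -- per-term integrals
  have hIlin : ∀ t : Fin n,
      ∫ θ in (0:ℝ)..1, r t * (if θ < w t then (1:ℝ) else 0) = r t * w t := by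
    intro t
    rw [intervalIntegral.integral_const_mul, step_integral _ (hw t).1 (hw t).2]
  have hIabs : ∀ t s : Fin n,
      ∫ θ in (0:ℝ)..1,
        μ t s * |(if θ < w t then (1:ℝ) else 0) - (if θ < w s then (1:ℝ) else 0)|
      = μ t s * |w t - w s| := by
    intro t s
    have h1 : (fun θ : ℝ => μ t s * |(if θ < w t then (1:ℝ) else 0) - (if θ < w s then (1:ℝ) else 0)|)
        = fun θ => μ t s * ((if θ < max (w t) (w s) then (1:ℝ) else 0)
            - (if θ < min (w t) (w s) then (1:ℝ) else 0)) := by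
      funext θ; rw [abs_step_sub_step]
    rw [h1, intervalIntegral.integral_const_mul,
      intervalIntegral.integral_sub (step_intervalIntegrable _) (step_intervalIntegrable _),
      step_integral _ (le_max_of_le_left (hw t).1) (max_le (hw t).2 (hw s).2),
      step_integral _ (le_min (hw t).1 (hw s).1) (min_le_of_left_le (hw t).2),
      max_sub_min_eq_abs]
    rw [abs_sub_comm]
  -- total integral
  have hI : ∫ θ in (0:ℝ)..1, Gf (fun t => if θ < w t then (1:ℝ) else 0) = Gf w := by
    have h : (fun θ : ℝ => Gf (fun t => if θ < w t then (1:ℝ) else 0))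
        = fun θ : ℝ => (c + ∑ t, r t * (if θ < w t then (1:ℝ) else 0))
          + ∑ t, ∑ s, μ t s * |(if θ < w t then (1:ℝ) else 0) - (if θ < w s then (1:ℝ) else 0)| := by
      funext θ; simp only [hGfdef]
    rw [h, intervalIntegral.integral_add
        (II.add' intervalIntegrable_const (II.sum' Finset.univ (fun t _ => hint1 t)))
        (II.sum' Finset.univ (fun t _ => II.sum' Finset.univ (fun s _ => hint2 t s))),
      intervalIntegral.integral_add intervalIntegrable_const
        (II.sum' Finset.univ (fun t _ => hint1 t)),
      intervalIntegral.integral_finset_sum (fun t _ => hint1 t),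
      intervalIntegral.integral_finset_sum
        (fun t _ => II.sum' Finset.univ (fun s _ => hint2 t s))]
    have h2 : ∀ t ∈ (Finset.univ : Finset (Fin n)),
        (∫ θ in (0:ℝ)..1, ∑ s, μ t s * |(if θ < w t then (1:ℝ) else 0) - (if θ < w s then (1:ℝ) else 0)|)
        = ∑ s, μ t s * |w t - w s| := by
      intro t _
      rw [intervalIntegral.integral_finset_sum (fun s _ => hint2 t s)]
      exact Finset.sum_congr rfl (fun s _ => hIabs t s)
    rw [Finset.sum_congr rfl h2, Finset.sum_congr rfl (fun t _ => hIlin t)]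
    simp only [intervalIntegral.integral_const, smul_eq_mul, sub_zero, one_mul, hGfdef]
  have hconst : ∫ _ in (0:ℝ)..1, Gf y = Gf y := by
    rw [intervalIntegral.integral_const]; simp
  calc Gf y = ∫ _ in (0:ℝ)..1, Gf y := hconst.symm
    _ ≤ ∫ θ in (0:ℝ)..1, Gf (fun t => if θ < w t then (1:ℝ) else 0) :=
        intervalIntegral.integral_mono_on zero_le_one intervalIntegrable_const hintF
          (fun θ _ => hpt θ)
    _ = Gf w := hI


lemma reach_iff_of_adj {V : Type*} {G' : SimpleGraph V} {a t s : V} (h : G'.Adj t s) :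
    G'.Reachable a t ↔ G'.Reachable a s :=
  ⟨fun hr => hr.trans h.reachable, fun hr => hr.trans h.symm.reachable⟩

/-- **Sufficiency direction of Theorem 1 (WNC ⇒ integral LP optimum).**
If every edge of the dependence graph `G` carrying a negative coefficient
`λ_{t,s}` is a bridge of `G` (lies on no cycle), then the projected LP objective
`f` attains its minimum over the cube `[0,1]^n` at a 0-1 point. -/
theorem lp_detection_integral_optimum_of_WNC
    (n : ℕ) (hn : 1 ≤ n) (q : Fin n → ℝ) (lam : Fin n → Fin n → ℝ)
    (G : SimpleGraph (Fin n))
    (hG : ∀ t s : Fin n, G.Adj t s ↔ t ≠ s ∧ lam (max t s) (min t s) ≠ 0)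
    (hbridge : ∀ t s : Fin n, s < t → lam t s < 0 → G.IsBridge s(t, s))
    (f : (Fin n → ℝ) → ℝ)
    (hf : ∀ u : Fin n → ℝ, f u =
        (∑ t, q t * u t)
        + (∑ t, ∑ s, if s < t ∧ 0 < lam t s then lam t s * |u t - u s| else 0)
        + (∑ t, ∑ s, if s < t ∧ lam t s < 0 then |lam t s| * |u t + u s - 1| else 0)) :
    ∃ x : Fin n → ℝ, (∀ t, x t = 0 ∨ x t = 1) ∧
      ∀ u : Fin n → ℝ, (∀ t, u t ∈ Set.Icc (0:ℝ) 1) → f x ≤ f u := by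
  classical
  -- adjacency from lam
  have hAdj : ∀ t s : Fin n, s < t → lam t s ≠ 0 → G.Adj t s := by
    intro t s hst hne
    rw [hG]
    refine ⟨hst.ne', ?_⟩
    rwa [max_eq_left hst.le, min_eq_right hst.le]
  set Neg : Finset (Fin n × Fin n) :=
    Finset.univ.filter (fun p => p.2 < p.1 ∧ lam p.1 p.2 < 0) with hNeg
  set σ : Fin n → Prop := fun v =>
    Odd ((Neg.filter (fun p =>
      (G \ SimpleGraph.fromEdgeSet {s(p.1, p.2)}).Reachable p.1 v)).card) with hσ
  -- positive edges: same side
  have hsame : ∀ t s : Fin n, s < t → 0 < lam t s → (σ t ↔ σ s) := by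
    intro t s hst hpos
    have hfilter : (Neg.filter (fun p =>
        (G \ SimpleGraph.fromEdgeSet {s(p.1, p.2)}).Reachable p.1 t))
        = (Neg.filter (fun p =>
        (G \ SimpleGraph.fromEdgeSet {s(p.1, p.2)}).Reachable p.1 s)) := by
      apply Finset.filter_congr
      intro p hp
      simp only [hNeg, Finset.mem_filter, Finset.mem_univ, true_and] at hp
      have hedge : s(t, s) ≠ s(p.1, p.2) := by
        intro he
        rcases Sym2.eq_iff.1 he with ⟨h1, h2⟩ | ⟨h1, h2⟩
        · subst h1; subst h2; exact absurd hp.2 (not_lt.2 hpos.le)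
        · subst h1; subst h2; exact absurd hp.1 (not_lt.2 hst.le)
      have hadj : (G \ SimpleGraph.fromEdgeSet {s(p.1, p.2)}).Adj t s := by
        rw [SimpleGraph.sdiff_adj]
        refine ⟨hAdj t s hst hpos.ne', ?_⟩
        rw [SimpleGraph.fromEdgeSet_adj]
        rintro ⟨hmem, -⟩
        exact hedge (Set.mem_singleton_iff.1 hmem)
      exact reach_iff_of_adj hadj
    simp only [hσ, hfilter]
  -- negative edges: opposite sides
  have hdiff : ∀ t s : Fin n, s < t → lam t s < 0 → ¬(σ t ↔ σ s) := by
    intro t s hst hneg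
    have hpNeg : (t, s) ∈ Neg := by
      simp only [hNeg, Finset.mem_filter, Finset.mem_univ, true_and]
      exact ⟨hst, hneg⟩
    have hnotmem : (t, s) ∉ (Neg.filter (fun p =>
        (G \ SimpleGraph.fromEdgeSet {s(p.1, p.2)}).Reachable p.1 s)) := by
      simp only [Finset.mem_filter]
      rintro ⟨-, hreach⟩
      exact (SimpleGraph.isBridge_iff.1 (hbridge t s hst hneg)) hreach
    have hins : (Neg.filter (fun p =>
        (G \ SimpleGraph.fromEdgeSet {s(p.1, p.2)}).Reachable p.1 t))
        = insert (t, s) (Neg.filter (fun p =>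
        (G \ SimpleGraph.fromEdgeSet {s(p.1, p.2)}).Reachable p.1 s)) := by
      ext p
      simp only [Finset.mem_filter, Finset.mem_insert]
      constructor
      · rintro ⟨hp, hreach⟩
        by_cases hpe : p = (t, s)
        · exact Or.inl hpe
        · refine Or.inr ⟨hp, ?_⟩
          -- the edge (t,s) survives in G minus edge p, transfer reachability
          simp only [hNeg, Finset.mem_filter, Finset.mem_univ, true_and] at hp
          have hedge : s(t, s) ≠ s(p.1, p.2) := by
            intro he
            rcases Sym2.eq_iff.1 he with ⟨h1, h2⟩ | ⟨h1, h2⟩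
            · exact hpe (by obtain ⟨a, b⟩ := p; simp_all)
            · rw [← h1, ← h2] at hp; exact absurd hp.1 (not_lt.2 hst.le)
          have hadj : (G \ SimpleGraph.fromEdgeSet {s(p.1, p.2)}).Adj t s := by
            rw [SimpleGraph.sdiff_adj]
            refine ⟨hAdj t s hst hneg.ne, ?_⟩
            rw [SimpleGraph.fromEdgeSet_adj]
            rintro ⟨hmem, -⟩
            exact hedge (Set.mem_singleton_iff.1 hmem)
          exact (reach_iff_of_adj hadj).1 hreach
      · rintro (hpe | ⟨hp, hreach⟩)
        · subst hpe
          exact ⟨hpNeg, SimpleGraph.Reachable.refl _⟩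
        · refine ⟨hp, ?_⟩
          by_cases hpe : p = (t, s)
          · subst hpe
            exact absurd hreach (SimpleGraph.isBridge_iff.1 (hbridge t s hst hneg))
          · simp only [hNeg, Finset.mem_filter, Finset.mem_univ, true_and] at hp
            have hedge : s(t, s) ≠ s(p.1, p.2) := by
              intro he
              rcases Sym2.eq_iff.1 he with ⟨h1, h2⟩ | ⟨h1, h2⟩
              · exact hpe (by obtain ⟨a, b⟩ := p; simp_all)
              · rw [← h1, ← h2] at hp; exact absurd hp.1 (not_lt.2 hst.le)
            have hadj : (G \ SimpleGraph.fromEdgeSet {s(p.1, p.2)}).Adj t s := by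
              rw [SimpleGraph.sdiff_adj]
              refine ⟨hAdj t s hst hneg.ne, ?_⟩
              rw [SimpleGraph.fromEdgeSet_adj]
              rintro ⟨hmem, -⟩
              exact hedge (Set.mem_singleton_iff.1 hmem)
            exact (reach_iff_of_adj hadj).2 hreach
    have hcard : (Neg.filter (fun p =>
        (G \ SimpleGraph.fromEdgeSet {s(p.1, p.2)}).Reachable p.1 t)).card
        = (Neg.filter (fun p =>
        (G \ SimpleGraph.fromEdgeSet {s(p.1, p.2)}).Reachable p.1 s)).card + 1 := by
      rw [hins, Finset.card_insert_of_notMem hnotmem]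
    simp only [hσ, hcard, Nat.odd_add_one]
    tauto
  -- change of variables: flip the coordinates with σ true
  set F : (Fin n → ℝ) → Fin n → ℝ :=
    fun u t => if σ t then 1 - u t else u t with hF
  set c : ℝ := ∑ t, if σ t then q t else 0 with hc
  set r : Fin n → ℝ := fun t => if σ t then -q t else q t with hr
  set μ : Fin n → Fin n → ℝ := fun t s => if s < t then |lam t s| else 0 with hμdef
  have hμ : ∀ t s, 0 ≤ μ t s := by
    intro t s
    simp only [hμdef]
    split
    · exact abs_nonneg _
    · exact le_refl 0
  -- the key identity
  have hkey : ∀ u : Fin n → ℝ,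
      f u = c + ∑ t, r t * F u t + ∑ t, ∑ s, μ t s * |F u t - F u s| := by
    intro u
    have hlin : ∑ t, q t * u t = (∑ t, if σ t then q t else 0) + ∑ t, r t * F u t := by
      rw [← Finset.sum_add_distrib]
      apply Finset.sum_congr rfl
      intro t _
      simp only [hr, hF]
      by_cases h : σ t <;> simp [h] <;> ring
    have hquad :
        (∑ t, ∑ s, if s < t ∧ 0 < lam t s then lam t s * |u t - u s| else 0)
        + (∑ t, ∑ s, if s < t ∧ lam t s < 0 then |lam t s| * |u t + u s - 1| else 0)
        = ∑ t, ∑ s, μ t s * |F u t - F u s| := by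
      rw [← Finset.sum_add_distrib]
      apply Finset.sum_congr rfl
      intro t _
      rw [← Finset.sum_add_distrib]
      apply Finset.sum_congr rfl
      intro s' _
      by_cases hst : s' < t
      · rcases lt_trichotomy (lam t s') 0 with hl | hl | hl
        · have hd := hdiff t s' hst hl
          simp only [hμdef, hF, hst, hl, if_true, true_and,
            not_lt.2 hl.le, false_and, if_false, and_true, and_false]
          by_cases h1 : σ t <;> by_cases h2 : σ s'
          · exact absurd (iff_of_true h1 h2) hd
          · simp only [h1, h2, if_true, if_false]
            rw [show (1 - u t) - u s' = -(u t + u s' - 1) by ring, abs_neg]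
            ring
          · simp only [h1, h2, if_true, if_false]
            rw [show u t - (1 - u s') = u t + u s' - 1 by ring]
            ring
          · exact absurd (iff_of_false h1 h2) hd
        · simp [hμdef, hst, hl]
        · have hs := hsame t s' hst hl
          simp only [hμdef, hF, hst, hl, if_true, true_and,
            not_lt.2 hl.le, and_false, if_false, and_true, abs_of_pos hl]
          by_cases h1 : σ t <;> by_cases h2 : σ s'
          · simp only [h1, h2, if_true]
            rw [show (1 - u t) - (1 - u s') = -(u t - u s') by ring, abs_neg]
            ring
          · exact absurd (hs.1 h1) h2
          · exact absurd (hs.2 h2) h1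
          · simp only [h1, h2, if_false]
            ring
      · simp [hμdef, hst]
    rw [hf u, hc]
    linarith [hlin, hquad]
  -- apply the Lovász rounding lemma
  obtain ⟨y, hy01, hymin⟩ := lovasz n c r μ hμ
  refine ⟨F y, ?_, ?_⟩
  · intro t
    simp only [hF]
    rcases hy01 t with h | h <;> by_cases hσt : σ t <;> simp [hσt, h]
  · intro u hu
    have hFF : F (F y) = y := by
      funext t
      simp only [hF]
      by_cases h : σ t <;> simp [h]
    have hFu : ∀ t, F u t ∈ Set.Icc (0:ℝ) 1 := by
      intro t
      simp only [hF]
      rcases hu t with ⟨h0, h1⟩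
      by_cases h : σ t <;> simp [h] <;> constructor <;> linarith
    calc f (F y) = c + ∑ t, r t * y t + ∑ t, ∑ s, μ t s * |y t - y s| := by
          rw [hkey (F y), hFF]
      _ ≤ c + ∑ t, r t * F u t + ∑ t, ∑ s, μ t s * |F u t - F u s| := hymin (F u) hFu
      _ = f u := (hkey u).symm
end

section
/- Let n ≥ 1 and for each pair s < t in {1,…,n} let λ_{t,s} ∈ ℝ. Define the simple graph G on {1,…,n} with an edge between t and s iff t ≠ s and λ_{t,s} ≠ 0, and define f₀ : ℝ^n → ℝ by f₀(u) = Σ_{s<t: λ_{t,s}>0} λ_{t,s}|u_t − u_s| + Σ_{s<t: λ_{t,s}<0} |λ_{t,s}| |u_t + u_s − 1| (the projected LP objective with q = 0). If G contains a cycle along which the number of edges {t,s} with λ_{t,s} < 0 is odd, then f₀(u) = 0 for u = (1/2,…,1/2), while f₀(x) > 0 for every x ∈ {0,1}^n. Consequently the minimum of f₀ over [0,1]^n is 0 and it is not attained at any integral point. -/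
private lemma walkParity {V : Type*} {G : SimpleGraph V} (b : V → Bool)
    (neg : Sym2 V → Bool)
    (h : ∀ a c : V, G.Adj a c → (b a = b c ↔ neg s(a, c) = false))
    {u w : V} (p : G.Walk u w) :
    (b u = b w ↔ Even (p.edges.countP neg)) := by
  induction p with
  | nil => simp
  | @cons u v w hadj q ih =>
    rw [SimpleGraph.Walk.edges_cons, List.countP_cons]
    have hiff := h u v hadj
    rcases Bool.eq_false_or_eq_true (neg s(u, v)) with hneg | hneg
    · have hne : b u ≠ b v := by
        intro e
        rw [hiff.1 e] at hneg
        simp at hneg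
      rw [hneg]
      simp only [if_true]
      rw [Nat.even_add_one, ← ih]
      cases hbu : b u <;> cases hbv : b v <;> cases hbw : b w <;> simp_all
    · have hb : b u = b v := hiff.2 hneg
      simp [hneg, hb, ih]

/-- **Necessity direction of Theorem 1.** If the dependence graph contains a cycle
along which the number of negative-coefficient edges is odd, then the projected LP
objective `f₀` (with `q = 0`) vanishes at the all-`1/2` point, is nonnegative on the
cube, and is strictly positive at every 0-1 point; hence its minimum over `[0,1]^n`
is `0` and is not attained at any integral point. -/
theorem lp_detection_fails_of_odd_negative_cycle
    (n : ℕ) (hn : 1 ≤ n) (lam : Fin n → Fin n → ℝ)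
    (G : SimpleGraph (Fin n))
    (hG : ∀ t s : Fin n, G.Adj t s ↔ t ≠ s ∧ lam (max t s) (min t s) ≠ 0)
    (hcycle : ∃ (v : Fin n) (p : G.Walk v v), p.IsCycle ∧
      Odd (p.edges.countP (fun e =>
        decide (Sym2.lift ⟨fun t s => lam (max t s) (min t s),
          fun t s => by simp only [sup_comm, inf_comm]⟩ e < 0))))
    (f₀ : (Fin n → ℝ) → ℝ)
    (hf₀ : ∀ u : Fin n → ℝ, f₀ u =
        (∑ t, ∑ s, if s < t ∧ 0 < lam t s then lam t s * |u t - u s| else 0)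
        + (∑ t, ∑ s, if s < t ∧ lam t s < 0 then |lam t s| * |u t + u s - 1| else 0)) :
    f₀ (fun _ => 1/2) = 0 ∧
    (∀ u : Fin n → ℝ, (∀ t, u t ∈ Set.Icc (0:ℝ) 1) → 0 ≤ f₀ u) ∧
    (∀ x : Fin n → ℝ, (∀ t, x t = 0 ∨ x t = 1) → 0 < f₀ x) := by
  have hterm1 : ∀ (u : Fin n → ℝ) (t s : Fin n),
      0 ≤ (if s < t ∧ 0 < lam t s then lam t s * |u t - u s| else 0) := by
    intro u t s
    split
    · next hc => exact mul_nonneg (le_of_lt hc.2) (abs_nonneg _)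
    · exact le_refl 0
  have hterm2 : ∀ (u : Fin n → ℝ) (t s : Fin n),
      0 ≤ (if s < t ∧ lam t s < 0 then |lam t s| * |u t + u s - 1| else 0) := by
    intro u t s
    split
    · exact mul_nonneg (abs_nonneg _) (abs_nonneg _)
    · exact le_refl 0
  have hS1 : ∀ u : Fin n → ℝ,
      0 ≤ ∑ t, ∑ s, if s < t ∧ 0 < lam t s then lam t s * |u t - u s| else 0 :=
    fun u => Finset.sum_nonneg fun t _ => Finset.sum_nonneg fun s _ => hterm1 u t s
  have hS2 : ∀ u : Fin n → ℝ,
      0 ≤ ∑ t, ∑ s, if s < t ∧ lam t s < 0 then |lam t s| * |u t + u s - 1| else 0 :=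
    fun u => Finset.sum_nonneg fun t _ => Finset.sum_nonneg fun s _ => hterm2 u t s
  have hnonneg : ∀ u, 0 ≤ f₀ u := by
    intro u
    rw [hf₀]
    exact add_nonneg (hS1 u) (hS2 u)
  refine ⟨?_, fun u _ => hnonneg u, ?_⟩
  · rw [hf₀]
    norm_num
  · intro x hx
    rcases lt_or_eq_of_le (hnonneg x) with hpos | heq
    · exact hpos
    exfalso
    have hzero : (∑ t, ∑ s, if s < t ∧ 0 < lam t s then lam t s * |x t - x s| else 0)
        + (∑ t, ∑ s, if s < t ∧ lam t s < 0 then |lam t s| * |x t + x s - 1| else 0) = 0 := by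
      rw [← hf₀]; exact heq.symm
    have hsum1 : (∑ t, ∑ s, if s < t ∧ 0 < lam t s then lam t s * |x t - x s| else 0) = 0 := by
      have := hS1 x; have := hS2 x; linarith
    have hsum2 : (∑ t, ∑ s, if s < t ∧ lam t s < 0 then |lam t s| * |x t + x s - 1| else 0) = 0 := by
      have := hS1 x; have := hS2 x; linarith
    have e1 : ∀ t s : Fin n, (if s < t ∧ 0 < lam t s then lam t s * |x t - x s| else 0) = 0 := by
      intro t s
      have houter := (Finset.sum_eq_zero_iff_of_nonneg
        (fun t _ => Finset.sum_nonneg fun s _ => hterm1 x t s)).1 hsum1 t (Finset.mem_univ t)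
      exact (Finset.sum_eq_zero_iff_of_nonneg (fun s _ => hterm1 x t s)).1 houter s
        (Finset.mem_univ s)
    have e2 : ∀ t s : Fin n, (if s < t ∧ lam t s < 0 then |lam t s| * |x t + x s - 1| else 0) = 0 := by
      intro t s
      have houter := (Finset.sum_eq_zero_iff_of_nonneg
        (fun t _ => Finset.sum_nonneg fun s _ => hterm2 x t s)).1 hsum2 t (Finset.mem_univ t)
      exact (Finset.sum_eq_zero_iff_of_nonneg (fun s _ => hterm2 x t s)).1 houter s
        (Finset.mem_univ s)
    have key1 : ∀ t s : Fin n, s < t → 0 < lam t s → x t = x s := by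
      intro t s hst hpos
      have h := e1 t s
      rw [if_pos ⟨hst, hpos⟩] at h
      rcases mul_eq_zero.1 h with h | h
      · exact absurd h (ne_of_gt hpos)
      · have := abs_eq_zero.1 h
        linarith [sub_eq_zero.1 this]
    have key2 : ∀ t s : Fin n, s < t → lam t s < 0 → x t + x s = 1 := by
      intro t s hst hneg
      have h := e2 t s
      rw [if_pos ⟨hst, hneg⟩] at h
      rcases mul_eq_zero.1 h with h | h
      · exact absurd (abs_eq_zero.1 h) (ne_of_lt hneg)
      · have := abs_eq_zero.1 h
        linarith
    -- boolean version
    set bx : Fin n → Bool := fun t => decide (x t = 1) with hbx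
    obtain ⟨v, p, hcyc, hodd⟩ := hcycle
    set neg : Sym2 (Fin n) → Bool := fun e =>
      decide (Sym2.lift ⟨fun t s => lam (max t s) (min t s),
        fun t s => by simp only [sup_comm, inf_comm]⟩ e < 0) with hnegdef
    have hkey : ∀ a c : Fin n, G.Adj a c → (bx a = bx c ↔ neg s(a, c) = false) := by
      intro a c hadj
      obtain ⟨hne, hlam⟩ := (hG a c).1 hadj
      have hminmax : min a c < max a c := min_lt_max.2 hne
      have hnegval : neg s(a, c) = decide (lam (max a c) (min a c) < 0) := by
        simp [hnegdef, Sym2.lift_mk]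
        rfl
      have hxac : x (max a c) = x a ∧ x (min a c) = x c ∨
          x (max a c) = x c ∧ x (min a c) = x a := by
        rcases le_total a c with h | h
        · right; rw [max_eq_right h, min_eq_left h]; exact ⟨rfl, rfl⟩
        · left; rw [max_eq_left h, min_eq_right h]; exact ⟨rfl, rfl⟩
      rcases lt_or_gt_of_ne hlam with hL | hL
      · -- negative coefficient: bits differ
        have hsum : x a + x c = 1 := by
          have := key2 (max a c) (min a c) hminmax hL
          rcases hxac with ⟨h1, h2⟩ | ⟨h1, h2⟩ <;> rw [h1, h2] at this <;> linarith
        have hxne : x a ≠ x c := by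
          rcases hx a with ha | ha <;> rcases hx c with hc | hc <;>
            (intro h; linarith)
        have hbne : bx a ≠ bx c := by
          rcases hx a with ha | ha <;> rcases hx c with hc | hc <;>
            simp [hbx, ha, hc] at hxne ⊢
        constructor
        · intro h; exact absurd h hbne
        · intro h
          rw [hnegval] at h
          simp at h
          exact absurd hL (not_lt.2 h)
      · -- positive coefficient: bits equal
        have hxeq : x a = x c := by
          have := key1 (max a c) (min a c) hminmax hL
          rcases hxac with ⟨h1, h2⟩ | ⟨h1, h2⟩ <;> rw [h1, h2] at this <;> linarith
        have hbeq : bx a = bx c := by simp [hbx, hxeq]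
        constructor
        · intro _
          rw [hnegval]
          simp
          linarith
        · intro _; exact hbeq
    have := (walkParity bx neg hkey p).1 rfl
    rw [hnegdef] at this
    exact (Nat.not_even_iff_odd.2 hodd) this
end

section
/- Let n ≥ 1, μ ≥ 1, and λ_0, λ_1, …, λ_μ ∈ ℝ, with λ_d = 0 for d > μ. Let x ∈ {0,1}^n with bipolar version x̃ = 1 − 2x ∈ {−1,1}^n, let η ∈ ℝ^n, and set q_t = −Σ_{s=1}^n λ_{|t−s|} x̃_s + η_t for each t. Define f(u) = Σ_t q_t u_t + Σ_{s<t: λ_{t−s}>0} λ_{t−s}|u_t − u_s| + Σ_{s<t: λ_{t−s}<0} |λ_{t−s}| |u_t + u_s − 1|. For a subset F ⊆ {1,…,n}, let x̂ ∈ [0,1]^n be defined by x̂_t = 1/2 for t ∈ F and x̂_t = x_t for t ∉ F, and let c_F = |F| λ_0 + Σ_{t,s∈F, s<t} |λ_{t−s}|. Then f(x) − f(x̂) = (1/2)[ c_F + Σ_{t,s∈F, s<t} λ_{t−s} x̃_t x̃_s − Σ_{t∈F} η_t x̃_t ]. In particular, if c_F + Σ_{t,s∈F, s<t} λ_{t−s}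 x̃_t x̃_s − Σ_{t∈F} η_t x̃_t > 0, then f(x̂) < f(x), so x is not a minimizer of f over [0,1]^n. -/
theorem sum_pairs_aux {n : ℕ} (g : Fin n → Fin n → ℝ) :
    ∑ t, ∑ s, g t s = (∑ t, ∑ s, if s < t then g t s + g s t else 0) + ∑ t, g t t := by
  have h1 : ∀ t s : Fin n, g t s =
      (if s < t then g t s else 0) + (if t < s then g t s else 0) + (if s = t then g t s else 0) := by
    intro t s
    rcases lt_trichotomy s t with h | h | h
    · simp [h, h.asymm, h.ne]
    · simp [h]
    · simp [h, h.asymm, h.ne']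
  calc ∑ t, ∑ s, g t s
      = ∑ t, ∑ s, ((if s < t then g t s else 0) + (if t < s then g t s else 0)
          + (if s = t then g t s else 0)) := by
        exact Finset.sum_congr rfl fun t _ => Finset.sum_congr rfl fun s _ => h1 t s
    _ = (∑ t, ∑ s, if s < t then g t s else 0) + (∑ t, ∑ s, if t < s then g t s else 0)
          + (∑ t, ∑ s, if s = t then g t s else 0) := by
        simp [Finset.sum_add_distrib]
    _ = (∑ t, ∑ s, if s < t then g t s else 0) + (∑ t, ∑ s, if s < t then g s t else 0)
          + ∑ t, g t t := by
        rw [Finset.sum_comm (f := fun t s => if t < s then g t s else 0)]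
        simp
    _ = (∑ t, ∑ s, if s < t then g t s + g s t else 0) + ∑ t, g t t := by
        rw [← Finset.sum_add_distrib]
        congr 1
        refine Finset.sum_congr rfl fun t _ => ?_
        rw [← Finset.sum_add_distrib]
        refine Finset.sum_congr rfl fun s _ => ?_
        split_ifs <;> simp

set_option maxHeartbeats 2000000 in
/-- **Theorem 2 and identity (29).** For a stationary partial-response channel with
state coefficients `λ_d` (vanishing for `d > μ`), transmitted binary word `x` with
bipolar version `x̃ = 1 − 2x`, filtered noise `η`, matched-filter outputs
`q_t = −Σ_s λ_{|t−s|} x̃_s + η_t`, projected LP objective `f`, fractional set `F`,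
half-integral competitor `x̂`, and `c_F = |F| λ_0 + Σ_{t,s∈F, s<t} |λ_{t−s}|`, one has
`f(x) − f(x̂) = (1/2)[c_F + Σ_{t,s∈F,s<t} λ_{t−s} x̃_t x̃_s − Σ_{t∈F} η_t x̃_t]`;
in particular, if the bracketed quantity is positive then `f(x̂) < f(x)` and `x` does
not minimize `f` over the cube `[0,1]^n`. -/
theorem lp_detection_failure_condition
    (n μ : ℕ) (hn : 1 ≤ n) (hμ : 1 ≤ μ)
    (lam : ℕ → ℝ) (hlam : ∀ d : ℕ, μ < d → lam d = 0)
    (x : Fin n → ℝ) (hx : ∀ t, x t = 0 ∨ x t = 1)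
    (xt : Fin n → ℝ) (hxt : ∀ t, xt t = 1 - 2 * x t)
    (η : Fin n → ℝ)
    (q : Fin n → ℝ)
    (hq : ∀ t : Fin n, q t = -(∑ s : Fin n, lam (Nat.dist (t : ℕ) (s : ℕ)) * xt s) + η t)
    (f : (Fin n → ℝ) → ℝ)
    (hf : ∀ u : Fin n → ℝ, f u =
        (∑ t : Fin n, q t * u t)
        + (∑ t : Fin n, ∑ s : Fin n, if s < t ∧ 0 < lam ((t : ℕ) - (s : ℕ)) then
            lam ((t : ℕ) - (s : ℕ)) * |u t - u s| else 0)
        + (∑ t : Fin n, ∑ s : Fin n, if s < t ∧ lam ((t : ℕ) - (s : ℕ)) < 0 then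
            |lam ((t : ℕ) - (s : ℕ))| * |u t + u s - 1| else 0))
    (F : Finset (Fin n))
    (xhat : Fin n → ℝ) (hxhat : ∀ t, xhat t = if t ∈ F then 1/2 else x t)
    (cF : ℝ)
    (hcF : cF = (F.card : ℝ) * lam 0
        + ∑ t ∈ F, ∑ s ∈ F, (if s < t then |lam ((t : ℕ) - (s : ℕ))| else 0)) :
    f x - f xhat = (1/2) * (cF
        + (∑ t ∈ F, ∑ s ∈ F, (if s < t then lam ((t : ℕ) - (s : ℕ)) * (xt t * xt s) else 0))
        - ∑ t ∈ F, η t * xt t) ∧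
    (0 < cF
        + (∑ t ∈ F, ∑ s ∈ F, (if s < t then lam ((t : ℕ) - (s : ℕ)) * (xt t * xt s) else 0))
        - ∑ t ∈ F, η t * xt t →
      f xhat < f x ∧
      ¬ (∀ u : Fin n → ℝ, (∀ t, u t ∈ Set.Icc (0:ℝ) 1) → f x ≤ f u)) := by
  classical
  have hxtv : ∀ t, (x t = 0 ∧ xt t = 1) ∨ (x t = 1 ∧ xt t = -1) := by
    intro t
    rcases hx t with h | h
    · exact Or.inl ⟨h, by rw [hxt, h]; ring⟩
    · exact Or.inr ⟨h, by rw [hxt, h]; ring⟩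
  -- the combined per-pair summand
  set G : Fin n → Fin n → ℝ := fun t s =>
    (if t ∈ F then lam (Nat.dist (t : ℕ) (s : ℕ)) * (xt t * xt s) / 2 else 0)
    + ((if s < t ∧ 0 < lam ((t : ℕ) - (s : ℕ)) then
          lam ((t : ℕ) - (s : ℕ)) * |x t - x s| else 0)
       - (if s < t ∧ 0 < lam ((t : ℕ) - (s : ℕ)) then
          lam ((t : ℕ) - (s : ℕ)) * |xhat t - xhat s| else 0))
    + ((if s < t ∧ lam ((t : ℕ) - (s : ℕ)) < 0 then
          |lam ((t : ℕ) - (s : ℕ))| * |x t + x s - 1| else 0)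
       - (if s < t ∧ lam ((t : ℕ) - (s : ℕ)) < 0 then
          |lam ((t : ℕ) - (s : ℕ))| * |xhat t + xhat s - 1| else 0)) with hG
  -- linear part
  have hlin : ∑ t : Fin n, q t * x t - ∑ t : Fin n, q t * xhat t =
      (∑ t : Fin n, ∑ s : Fin n, (if t ∈ F then lam (Nat.dist (t : ℕ) (s : ℕ)) * (xt t * xt s) / 2 else 0))
      - ∑ t : Fin n, (if t ∈ F then η t * xt t / 2 else 0) := by
    rw [← Finset.sum_sub_distrib, ← Finset.sum_sub_distrib]
    refine Finset.sum_congr rfl fun t _ => ?_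
    by_cases ht : t ∈ F
    · have hxv : x t = 1/2 - xt t / 2 := by have := hxt t; linarith
      rw [hq t, hxhat t, if_pos ht, hxv]
      simp only [ht, if_true]
      have hsum : ∑ s : Fin n, lam (Nat.dist (t : ℕ) (s : ℕ)) * (xt t * xt s) / 2 =
          (∑ s : Fin n, lam (Nat.dist (t : ℕ) (s : ℕ)) * xt s) * xt t / 2 := by
        rw [Finset.sum_mul, Finset.sum_div]
        exact Finset.sum_congr rfl fun s _ => by ring
      rw [hsum]; ring
    · rw [hxhat t, if_neg ht]
      simp [ht]
  -- key decomposition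
  have key : f x - f xhat = (∑ t : Fin n, ∑ s : Fin n, G t s) - ∑ t : Fin n, (if t ∈ F then η t * xt t / 2 else 0) := by
    rw [hf x, hf xhat]
    simp only [hG]
    simp only [Finset.sum_add_distrib, Finset.sum_sub_distrib]
    linarith [hlin]
  -- diagonal
  have hdiag : ∑ t : Fin n, G t t = (F.card : ℝ) * lam 0 / 2 := by
    have : ∀ t : Fin n, G t t = (if t ∈ F then lam 0 / 2 else 0) := by
      intro t
      simp only [hG]
      rcases hxtv t with ⟨_, h⟩ | ⟨_, h⟩ <;>
        simp [lt_irrefl, Nat.dist_self, h]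
    rw [Finset.sum_congr rfl fun t _ => this t]
    simp [Finset.sum_ite_mem, Finset.univ_inter, Finset.sum_const]
    ring
  -- off-diagonal pointwise identity
  have hpoint : ∀ t s : Fin n, (if s < t then G t s + G s t else 0) =
      (if t ∈ F ∧ s ∈ F ∧ s < t then
        (|lam ((t : ℕ) - (s : ℕ))| + lam ((t : ℕ) - (s : ℕ)) * (xt t * xt s)) / 2 else 0) := by
    intro t s
    by_cases hst : s < t
    · have hts : ¬ t < s := hst.asymm
      have hd1 : Nat.dist (t : ℕ) (s : ℕ) = (t : ℕ) - (s : ℕ) :=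
        Nat.dist_eq_sub_of_le_right (le_of_lt hst)
      have hd2 : Nat.dist (s : ℕ) (t : ℕ) = (t : ℕ) - (s : ℕ) :=
        Nat.dist_eq_sub_of_le (le_of_lt hst)
      rw [if_pos hst]
      simp only [hG, hd1, hd2, hts, false_and, if_false, sub_zero]
      set L := lam ((t : ℕ) - (s : ℕ)) with hL
      have habs : |(1:ℝ)/2| = 1/2 := by norm_num
      have habs2 : |(2:ℝ)⁻¹| = 2⁻¹ := by norm_num
      rcases hxtv t with ⟨hxt0, hxtt⟩ | ⟨hxt0, hxtt⟩ <;>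
        rcases hxtv s with ⟨hxs0, hxts⟩ | ⟨hxs0, hxts⟩ <;>
        by_cases ht : t ∈ F <;> by_cases hs : s ∈ F <;>
        rcases lt_trichotomy L 0 with h | h | h <;>
        simp only [hxhat t, hxhat s, ht, hs, if_true, if_false, hxt0, hxs0, hxtt, hxts,
          hst, true_and, and_true] <;>
        first
          | (simp [h, h.not_gt, abs_of_neg h, habs, habs2]; (try norm_num); (try ring_nf); (try norm_num [habs, habs2]); (try ring_nf); (try linarith); done)
          | (simp [h, habs, habs2]; (try norm_num); (try ring_nf); (try norm_num [habs, habs2]); (try ring_nf); (try linarith); done)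
          | (simp [h, h.not_gt, abs_of_pos h, habs, habs2]; (try norm_num); (try ring_nf); (try norm_num [habs, habs2]); (try ring_nf); (try linarith); done)
    · simp [hst]
  -- F-sums as full sums
  have hconv : ∀ h : Fin n → Fin n → ℝ,
      (∑ t : Fin n, ∑ s : Fin n, if t ∈ F ∧ s ∈ F ∧ s < t then h t s else 0) =
        ∑ t ∈ F, ∑ s ∈ F, (if s < t then h t s else 0) := by
    intro h
    have : ∀ t : Fin n, (∑ s : Fin n, if t ∈ F ∧ s ∈ F ∧ s < t then h t s else 0)
        = (if t ∈ F then ∑ s : Fin n, (if s ∈ F then (if s < t then h t s else 0) else 0) else 0) := by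
      intro t
      by_cases ht : t ∈ F
      · simp only [ht, if_true, true_and]
        refine Finset.sum_congr rfl fun s _ => ?_
        by_cases hs : s ∈ F <;> simp [hs]
      · simp [ht]
    rw [Finset.sum_congr rfl fun t _ => this t]
    simp [Finset.sum_ite_mem, Finset.univ_inter]
  -- eta sum
  have heta : ∑ t : Fin n, (if t ∈ F then η t * xt t / 2 else 0) = (∑ t ∈ F, η t * xt t) / 2 := by
    simp [Finset.sum_ite_mem, Finset.univ_inter, Finset.sum_div]
  -- assemble part one
  have main : f x - f xhat = (1/2) * (cF
      + (∑ t ∈ F, ∑ s ∈ F, (if s < t then lam ((t : ℕ) - (s : ℕ)) * (xt t * xt s) else 0))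
      - ∑ t ∈ F, η t * xt t) := by
    rw [key, sum_pairs_aux G, Finset.sum_congr rfl fun t _ =>
      Finset.sum_congr rfl fun s _ => hpoint t s, hdiag, heta, hcF]
    have hsplit : (∑ t : Fin n, ∑ s : Fin n, if t ∈ F ∧ s ∈ F ∧ s < t then
          (|lam ((t : ℕ) - (s : ℕ))| + lam ((t : ℕ) - (s : ℕ)) * (xt t * xt s)) / 2 else 0)
        = ((∑ t : Fin n, ∑ s : Fin n, if t ∈ F ∧ s ∈ F ∧ s < t then |lam ((t : ℕ) - (s : ℕ))| else 0)
          + (∑ t : Fin n, ∑ s : Fin n, if t ∈ F ∧ s ∈ F ∧ s < t then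
              lam ((t : ℕ) - (s : ℕ)) * (xt t * xt s) else 0)) / 2 := by
      rw [← Finset.sum_add_distrib, Finset.sum_div]
      refine Finset.sum_congr rfl fun t _ => ?_
      rw [← Finset.sum_add_distrib, Finset.sum_div]
      refine Finset.sum_congr rfl fun s _ => ?_
      split_ifs <;> ring
    rw [hsplit, hconv, hconv]
    ring
  refine ⟨main, fun hpos => ?_⟩
  have hlt : f xhat < f x := by nlinarith [main]
  refine ⟨hlt, fun hmin => ?_⟩
  have hmem : ∀ t, xhat t ∈ Set.Icc (0:ℝ) 1 := by
    intro t
    rw [hxhat t]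
    by_cases ht : t ∈ F
    · simp [ht]; norm_num
    · rcases hx t with h | h <;> simp [ht, h]
  exact absurd (hmin xhat hmem) (not_le.mpr hlt)
end

section
/- Let n ≥ 1, μ ≥ 1, and λ_0, λ_1, …, λ_μ ∈ ℝ, with λ_d = 0 for d > μ. Let x ∈ {0,1}^n with bipolar version x̃ = 1 − 2x, set q_t = −Σ_{s=1}^n λ_{|t−s|} x̃_s (the noiseless matched-filter output), and define f(u) = Σ_t q_t u_t + Σ_{s<t: λ_{t−s}>0} λ_{t−s}|u_t − u_s| + Σ_{s<t: λ_{t−s}<0} |λ_{t−s}| |u_t + u_s − 1|. Suppose there exists a subset F ⊆ {1,…,n} such that d_F := −c_F − Σ_{t,s∈F, s<t} λ_{t−s} x̃_t x̃_s < 0, where c_F = |F| λ_0 + Σ_{t,s∈F, s<t} |λ_{t−s}|. Then the half-integral vector x̂ (with x̂_t = 1/2 for t ∈ F and x̂_t = x_t otherwise) satisfies f(x̂) < f(x); i.e., uncoded LP detection fails to return the transmitted sequence even in the absence of noise. -/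
lemma lp_key (a u v : ℝ) (hu : u = 0 ∨ u = 1) (hv : v = 0 ∨ v = 1)
    (mu mv : Prop) [Decidable mu] [Decidable mv]
    (p r : ℝ) (hp : p = if mu then 1/2 else u) (hr : r = if mv then 1/2 else v)
    (eu ev : ℝ) (heu : eu = 1 - 2*u) (hev : ev = 1 - 2*v) :
    (if mu then -(a * ev * eu) / 2 else 0)
    + (if mv then -(a * eu * ev) / 2 else 0)
    + ((if 0 < a then a * |p - r| else 0) - (if 0 < a then a * |u - v| else 0))
    + ((if a < 0 then |a| * |p + r - 1| else 0) - (if a < 0 then |a| * |u + v - 1| else 0))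
    = -(1/2) * (if mu ∧ mv then |a| + a * (eu * ev) else 0) := by
  subst hp hr heu hev
  rcases lt_trichotomy a 0 with h | h | h
  · by_cases hmu : mu <;> by_cases hmv : mv <;>
      rcases hu with hu | hu <;> rcases hv with hv | hv <;>
      subst hu hv <;>
      simp only [if_pos, if_neg, hmu, hmv, h, not_lt.2 h.le, abs_of_neg h,
        and_self, and_true, true_and, if_true, if_false, ite_true, ite_false] <;>
      norm_num [abs_of_neg, abs_of_nonneg, abs_of_pos] <;> nlinarith [abs_nonneg a]
  · subst h; by_cases hmu : mu <;> by_cases hmv : mv <;> simp [hmu, hmv]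
  · by_cases hmu : mu <;> by_cases hmv : mv <;>
      rcases hu with hu | hu <;> rcases hv with hv | hv <;>
      subst hu hv <;>
      simp only [if_pos, if_neg, hmu, hmv, h, not_lt.2 h.le, abs_of_pos h,
        and_self, and_true, true_and, if_true, if_false, ite_true, ite_false] <;>
      norm_num [abs_of_neg, abs_of_nonneg, abs_of_pos] <;> nlinarith [abs_nonneg a]




/-- **Corollary (LP-improper channels), deterministic part.** With zero noise
(`q_t = −Σ_s λ_{|t−s|} x̃_s`), if some fractional set `F` has negative distance
`d_F = −c_F − Σ_{t,s∈F,s<t} λ_{t−s} x̃_t x̃_s`, then the half-integral competitor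
`x̂` beats the transmitted word: `f(x̂) < f(x)`. -/
theorem lp_improper_noiseless_failure
    (n μ : ℕ) (hn : 1 ≤ n) (hμ : 1 ≤ μ)
    (lam : ℕ → ℝ) (hlam : ∀ d : ℕ, μ < d → lam d = 0)
    (x : Fin n → ℝ) (hx : ∀ t, x t = 0 ∨ x t = 1)
    (xt : Fin n → ℝ) (hxt : ∀ t, xt t = 1 - 2 * x t)
    (q : Fin n → ℝ)
    (hq : ∀ t : Fin n, q t = -(∑ s : Fin n, lam (Nat.dist (t : ℕ) (s : ℕ)) * xt s))
    (f : (Fin n → ℝ) → ℝ)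
    (hf : ∀ u : Fin n → ℝ, f u =
        (∑ t : Fin n, q t * u t)
        + (∑ t : Fin n, ∑ s : Fin n, if s < t ∧ 0 < lam ((t : ℕ) - (s : ℕ)) then
            lam ((t : ℕ) - (s : ℕ)) * |u t - u s| else 0)
        + (∑ t : Fin n, ∑ s : Fin n, if s < t ∧ lam ((t : ℕ) - (s : ℕ)) < 0 then
            |lam ((t : ℕ) - (s : ℕ))| * |u t + u s - 1| else 0))
    (F : Finset (Fin n))
    (xhat : Fin n → ℝ) (hxhat : ∀ t, xhat t = if t ∈ F then 1/2 else x t)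
    (cF : ℝ)
    (hcF : cF = (F.card : ℝ) * lam 0
        + ∑ t ∈ F, ∑ s ∈ F, (if s < t then |lam ((t : ℕ) - (s : ℕ))| else 0))
    (dF : ℝ)
    (hdF : dF = -cF
        - ∑ t ∈ F, ∑ s ∈ F, (if s < t then lam ((t : ℕ) - (s : ℕ)) * (xt t * xt s) else 0))
    (hneg : dF < 0) :
    f xhat < f x := by
  classical
  obtain ⟨A, hA⟩ : ∃ A : Fin n → Fin n → ℝ, ∀ t s, A t s =
      (if t ∈ F then -(lam (Nat.dist (t:ℕ) (s:ℕ)) * xt s * xt t) / 2 else 0)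
      + ((if s < t ∧ 0 < lam ((t:ℕ) - (s:ℕ)) then lam ((t:ℕ)-(s:ℕ)) * |xhat t - xhat s| else 0)
         - (if s < t ∧ 0 < lam ((t:ℕ) - (s:ℕ)) then lam ((t:ℕ)-(s:ℕ)) * |x t - x s| else 0))
      + ((if s < t ∧ lam ((t:ℕ)-(s:ℕ)) < 0 then |lam ((t:ℕ)-(s:ℕ))| * |xhat t + xhat s - 1| else 0)
         - (if s < t ∧ lam ((t:ℕ)-(s:ℕ)) < 0 then |lam ((t:ℕ)-(s:ℕ))| * |x t + x s - 1| else 0)) :=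
    ⟨_, fun _ _ => rfl⟩
  obtain ⟨B, hB⟩ : ∃ B : Fin n → Fin n → ℝ, ∀ t s, B t s =
      -(1/2) * ((if t ∈ F ∧ s = t then lam 0 else 0)
        + (if t ∈ F ∧ s ∈ F ∧ s < t then
            |lam ((t:ℕ)-(s:ℕ))| + lam ((t:ℕ)-(s:ℕ)) * (xt t * xt s) else 0)) :=
    ⟨_, fun _ _ => rfl⟩
  have hxx : ∀ t : Fin n, xt t * xt t = 1 := fun t => by
    rcases hx t with h | h <;> rw [hxt t, h] <;> norm_num
  -- pointwise linear part
  have hlin : ∀ t : Fin n, q t * xhat t - q t * x t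
      = ∑ s : Fin n, (if t ∈ F then -(lam (Nat.dist (t:ℕ) (s:ℕ)) * xt s * xt t) / 2 else 0) := by
    intro t
    by_cases ht : t ∈ F
    · have e1 : q t * xhat t - q t * x t
          = (∑ s : Fin n, lam (Nat.dist (t:ℕ) (s:ℕ)) * xt s) * (-(xt t)/2) := by
        rw [hq t, hxhat t, hxt t]
        simp only [ht, if_true, ite_true]
        ring
      rw [e1, Finset.sum_mul]
      exact Finset.sum_congr rfl fun s _ => by simp only [ht, if_true, ite_true]; ring
    · simp [hxhat t, ht]
  -- Step 1
  have h1 : f xhat - f x = ∑ t : Fin n, ∑ s : Fin n, A t s := by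
    rw [hf xhat, hf x]
    simp only [hA]
    simp only [← Finset.sum_sub_distrib, ← Finset.sum_add_distrib]
    refine Finset.sum_congr rfl fun t _ => ?_
    simp only [Finset.sum_add_distrib, Finset.sum_sub_distrib]
    linarith [hlin t]
  -- Step 2: symmetric pointwise identity
  have h2 : ∀ t s : Fin n, s < t → A t s + A s t = B t s + B s t := by
    intro t s hts
    have hstn : (s:ℕ) < (t:ℕ) := hts
    have hst : ¬ t < s := not_lt.2 hts.le
    have hne : ¬ (s = t) := ne_of_lt hts
    have hne' : ¬ (t = s) := (ne_of_lt hts).symm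
    have hd1 : Nat.dist (t:ℕ) (s:ℕ) = (t:ℕ) - (s:ℕ) := Nat.dist_eq_sub_of_le_right hstn.le
    have hd2 : Nat.dist (s:ℕ) (t:ℕ) = (t:ℕ) - (s:ℕ) := Nat.dist_eq_sub_of_le hstn.le
    have K := lp_key (lam ((t:ℕ) - (s:ℕ))) (x t) (x s) (hx t) (hx s) (t ∈ F) (s ∈ F)
        (xhat t) (xhat s) (hxhat t) (hxhat s) (xt t) (xt s) (hxt t) (hxt s)
    simp only [hA, hB, hd1, hd2, hts, hst, hne, hne', true_and, false_and, and_false,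
      if_true, if_false, ite_true, ite_false, and_true, sub_zero, add_zero, zero_add,
      mul_zero, neg_zero]
    linarith [K]
  have hdiag : ∀ t : Fin n, A t t = B t t := by
    intro t
    simp only [hA, hB, lt_irrefl, false_and, and_false, if_false, ite_false,
      Nat.dist_self, sub_zero, add_zero, zero_add, and_true, mul_zero, neg_zero]
    by_cases ht : t ∈ F
    · simp only [ht, if_true, ite_true, true_and]
      linear_combination (-(lam 0)/2) * hxx t
    · simp [ht]
  -- Step 2': sums are equal
  have hABsum : ∑ t : Fin n, ∑ s : Fin n, A t s = ∑ t : Fin n, ∑ s : Fin n, B t s := by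
    have hAswap : ∑ t : Fin n, ∑ s : Fin n, A t s = ∑ t : Fin n, ∑ s : Fin n, A s t :=
      Finset.sum_comm
    have hBswap : ∑ t : Fin n, ∑ s : Fin n, B t s = ∑ t : Fin n, ∑ s : Fin n, B s t :=
      Finset.sum_comm
    have hsum : ∑ t : Fin n, ∑ s : Fin n, (A t s + A s t)
        = ∑ t : Fin n, ∑ s : Fin n, (B t s + B s t) := by
      refine Finset.sum_congr rfl fun t _ => Finset.sum_congr rfl fun s _ => ?_
      rcases lt_trichotomy s t with h | h | h
      · exact h2 t s h
      · rw [h, hdiag t]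
      · have := h2 s t h; linarith
    simp only [Finset.sum_add_distrib] at hsum
    rw [← hAswap, ← hBswap] at hsum
    linarith
  -- Step 3: ∑∑ B = dF / 2
  have hmem : ∀ (g : Fin n → ℝ), (∑ s : Fin n, if s ∈ F then g s else 0) = ∑ s ∈ F, g s := by
    intro g; rw [Finset.sum_ite_mem, Finset.univ_inter]
  have hc1 : ∑ t : Fin n, ∑ s : Fin n, (if t ∈ F ∧ s = t then lam 0 else 0)
      = (F.card : ℝ) * lam 0 := by
    have e : ∀ t : Fin n, (∑ s : Fin n, if t ∈ F ∧ s = t then lam 0 else 0)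
        = if t ∈ F then lam 0 else 0 := by
      intro t; by_cases ht : t ∈ F <;> simp [ht]
    rw [Finset.sum_congr rfl fun t _ => e t, hmem fun _ => lam 0]
    simp [mul_comm]
  have hc2 : ∑ t : Fin n, ∑ s : Fin n, (if t ∈ F ∧ s ∈ F ∧ s < t then
        |lam ((t:ℕ)-(s:ℕ))| + lam ((t:ℕ)-(s:ℕ)) * (xt t * xt s) else 0)
      = ∑ t ∈ F, ∑ s ∈ F, (if s < t then
        |lam ((t:ℕ)-(s:ℕ))| + lam ((t:ℕ)-(s:ℕ)) * (xt t * xt s) else 0) := by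
    have e : ∀ t : Fin n, (∑ s : Fin n, if t ∈ F ∧ s ∈ F ∧ s < t then
          |lam ((t:ℕ)-(s:ℕ))| + lam ((t:ℕ)-(s:ℕ)) * (xt t * xt s) else 0)
        = if t ∈ F then (∑ s ∈ F, if s < t then
          |lam ((t:ℕ)-(s:ℕ))| + lam ((t:ℕ)-(s:ℕ)) * (xt t * xt s) else 0) else 0 := by
      intro t; by_cases ht : t ∈ F
      · rw [if_pos ht, ← hmem]
        refine Finset.sum_congr rfl fun s _ => ?_
        simp only [ht, true_and, ite_and]
      · simp [ht]
    rw [Finset.sum_congr rfl fun t _ => e t, hmem]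
  have hsplit : ∑ t ∈ F, ∑ s ∈ F, (if s < t then
        |lam ((t:ℕ)-(s:ℕ))| + lam ((t:ℕ)-(s:ℕ)) * (xt t * xt s) else 0)
      = (∑ t ∈ F, ∑ s ∈ F, (if s < t then |lam ((t:ℕ)-(s:ℕ))| else 0))
        + (∑ t ∈ F, ∑ s ∈ F, (if s < t then lam ((t:ℕ)-(s:ℕ)) * (xt t * xt s) else 0)) := by
    simp only [← Finset.sum_add_distrib]
    refine Finset.sum_congr rfl fun t _ => Finset.sum_congr rfl fun s _ => ?_
    split_ifs <;> simp
  have hBsum : ∑ t : Fin n, ∑ s : Fin n, B t s = dF / 2 := by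
    simp only [hB]
    simp only [← Finset.mul_sum]
    simp only [Finset.sum_add_distrib]
    rw [hc1, hc2, hsplit, hdF, hcF]
    ring
  linarith [h1, hABsum, hBsum, hneg]
end

section
/- Let μ ≥ 1 and h_0, …, h_μ ∈ ℝ with not all h_i zero, and define λ_j = −Σ_{i=0}^{μ−j} h_i h_{i+j} for j = 0, …, μ (so λ_0 = −Σ_i h_i² < 0). If λ_j ≥ 0 for all j = 1, …, μ (the Nonnegativity Condition), then the LP distance δ_∞ = ( |λ_0| − Σ_{j=1}^{μ} |λ_j| ) / |λ_0| satisfies δ_∞ ≥ 1/2. -/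
lemma sq_sum_expand (h : ℕ → ℝ) (n : ℕ) :
    (∑ i ∈ Finset.range n, h i) ^ 2 =
      ∑ i ∈ Finset.range n, h i * h i
        + 2 * ∑ k ∈ Finset.range n, ∑ i ∈ Finset.range k, h i * h k := by
  induction n with
  | zero => simp
  | succ n ih =>
    rw [Finset.sum_range_succ, add_sq, ih, Finset.sum_range_succ (fun i => h i * h i),
      Finset.sum_range_succ (fun k => ∑ i ∈ Finset.range k, h i * h k), ← Finset.sum_mul]
    ring

lemma reindex (h : ℕ → ℝ) (μ : ℕ) :
    ∑ j ∈ Finset.Icc 1 μ, ∑ i ∈ Finset.range (μ - j + 1), h i * h (i + j)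
      = ∑ k ∈ Finset.range (μ + 1), ∑ i ∈ Finset.range k, h i * h k := by
  rw [Finset.sum_sigma', Finset.sum_sigma']
  apply Finset.sum_nbij' (fun p => (⟨p.2 + p.1, p.2⟩ : Σ _ : ℕ, ℕ))
    (fun q => (⟨q.1 - q.2, q.2⟩ : Σ _ : ℕ, ℕ))
  · rintro ⟨j, i⟩ hp
    simp only [Finset.mem_sigma, Finset.mem_Icc, Finset.mem_range] at hp ⊢
    omega
  · rintro ⟨k, i⟩ hq
    simp only [Finset.mem_sigma, Finset.mem_Icc, Finset.mem_range] at hq ⊢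
    omega
  · rintro ⟨j, i⟩ hp
    simp only [Finset.mem_sigma, Finset.mem_Icc, Finset.mem_range] at hp
    simp only [Sigma.mk.inj_iff]
    exact ⟨by omega, HEq.rfl⟩
  · rintro ⟨k, i⟩ hq
    simp only [Finset.mem_sigma, Finset.mem_Icc, Finset.mem_range] at hq
    simp only [Sigma.mk.inj_iff]
    exact ⟨by omega, HEq.rfl⟩
  · rintro ⟨j, i⟩ _
    rfl

/-- **Lemma 4.** For a nonzero impulse response `h_0, …, h_μ` with state
coefficients `λ_j = −Σ_{i=0}^{μ−j} h_i h_{i+j}` (so `λ_0 = −Σ_i h_i² < 0`)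
satisfying the Nonnegativity Condition `λ_j ≥ 0` for `j = 1, …, μ`, the LP
distance `δ_∞ = (|λ_0| − Σ_{j=1}^{μ}|λ_j|) / |λ_0|` is at least `1/2`. -/
theorem lp_distance_ge_half_of_NC
    (μ : ℕ) (hμ : 1 ≤ μ) (h : ℕ → ℝ)
    (hnonzero : ∃ i ≤ μ, h i ≠ 0)
    (lam : ℕ → ℝ)
    (hlam : ∀ j ≤ μ, lam j = -(∑ i ∈ Finset.range (μ - j + 1), h i * h (i + j)))
    (hNC : ∀ j, 1 ≤ j → j ≤ μ → 0 ≤ lam j) :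
    (1 : ℝ) / 2 ≤ (|lam 0| - ∑ j ∈ Finset.Icc 1 μ, |lam j|) / |lam 0| := by
  set A : ℝ := ∑ i ∈ Finset.range (μ + 1), h i * h i with hA
  have hlam0 : lam 0 = -A := by
    rw [hlam 0 (Nat.zero_le μ)]
    simp [hA]
  have hApos : 0 < A := by
    obtain ⟨i0, hi0, hne⟩ := hnonzero
    have h1 : h i0 * h i0 ≤ A :=
      Finset.single_le_sum (f := fun i => h i * h i)
        (fun i _ => mul_self_nonneg _) (Finset.mem_range.2 (by omega))
    have h2 : 0 < h i0 * h i0 := mul_self_pos.2 hne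
    linarith
  have habs0 : |lam 0| = A := by
    rw [hlam0, abs_neg, abs_of_pos hApos]
  set T : ℝ := ∑ j ∈ Finset.Icc 1 μ, ∑ i ∈ Finset.range (μ - j + 1), h i * h (i + j)
    with hT
  have hsumabs : ∑ j ∈ Finset.Icc 1 μ, |lam j| = -T := by
    rw [hT, ← Finset.sum_neg_distrib]
    apply Finset.sum_congr rfl
    intro j hj
    rw [Finset.mem_Icc] at hj
    rw [abs_of_nonneg (hNC j hj.1 hj.2), hlam j hj.2]
  have hkey : 0 ≤ A + 2 * T := by
    have := sq_sum_expand h (μ + 1)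
    rw [← reindex h μ, ← hT, ← hA] at this
    have hsq : 0 ≤ (∑ i ∈ Finset.range (μ + 1), h i) ^ 2 := sq_nonneg _
    linarith
  rw [habs0, hsumabs, le_div_iff₀ hApos]
  linarith
end
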